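/- Rule 1 (insertion/deletion of observations) equivalence of antecedents: for an aADMG G and disjoint subsets X, Y, Z, W of V, Y is separated from Z given X ∪ W in G_X̂ (the graph obtained from G by the intervention operation on X) if and only if Y is separated from Z given W in G with all directed edges into and out of X deleted. -/

import Mathlib

open scoped Classical
open MeasureTheory ProbabilityTheory

noncomputable section

/-- A mixed graph over a node set `V`, with directed (`dir`), undirected (`undir`)
and bidirected (`bidir`) edges. -/
structure MixedGraph (V : Type*) where
  dir : V → V → Prop
  undir : V → V → Prop
  bidir : V → V → Prop

namespace MixedGraph

variable {V : Type*}

/-- An ADMG: symmetric undirected/bidirected edges, no self loops, no directed cycles. -/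
def WellFormed (G : MixedGraph V) : Prop :=
  (∀ a b, G.undir a b → G.undir b a) ∧
  (∀ a b, G.bidir a b → G.bidir b a) ∧
  (∀ a, ¬ G.dir a a) ∧ (∀ a, ¬ G.undir a a) ∧ (∀ a, ¬ G.bidir a a) ∧
  (∀ a, ¬ Relation.TransGen G.dir a a)

/-- An aADMG has no bidirected edges. -/
def NoBidirected (G : MixedGraph V) : Prop := ∀ a b, ¬ G.bidir a b

/-- The kind of an edge traversed from left to right along a route. -/
inductive Step : Type
  | fwd | bwd | bi | un
deriving DecidableEq

/-- Validity of traversing from `x` to `y` by a step of the given kind. -/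
def StepValid (G : MixedGraph V) (x : V) : Step → V → Prop
  | Step.fwd, y => G.dir x y
  | Step.bwd, y => G.dir y x
  | Step.bi, y => G.bidir x y
  | Step.un, y => G.undir x y

/-- A route between `α` and `β`: a sequence of (not necessarily distinct) nodes
`nodes 0, …, nodes n` consecutively joined by edges. -/
structure Route (G : MixedGraph V) (α β : V) where
  n : ℕ
  npos : 0 < n
  nodes : ℕ → V
  steps : ℕ → Step
  first : nodes 0 = α
  last : nodes n = β
  valid : ∀ i, i < n → StepValid G (nodes i) (steps i) (nodes (i + 1))

/-- Arrowhead at the right end of a step. -/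
def headInto (s : Step) : Prop := s = Step.fwd ∨ s = Step.bi

/-- Arrowhead at the left end of a step. -/
def headOut (s : Step) : Prop := s = Step.bwd ∨ s = Step.bi

variable {G : MixedGraph V} {α β : V}

/-- The interior node at position `i` (with `0 < i < n`) is a collider:
an arrowhead into it on at least one side, and on each side either an
arrowhead into it or an undirected edge. -/
def Route.IsCollider (r : Route G α β) (i : ℕ) : Prop :=
  (headInto (r.steps (i - 1)) ∨ headOut (r.steps i)) ∧
  (headInto (r.steps (i - 1)) ∨ r.steps (i - 1) = Step.un) ∧
  (headOut (r.steps i) ∨ r.steps i = Step.un)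

/-- `a` is an ancestor of the set `Z` (or belongs to it). -/
def Anc (G : MixedGraph V) (Z : Set V) (a : V) : Prop :=
  ∃ z ∈ Z, Relation.ReflTransGen G.dir a z

/-- Path-based connection criterion given `Z`. -/
def Route.PathConnecting (r : Route G α β) (Z : Set V) : Prop :=
  ∀ i, 0 < i → i < r.n →
    (r.IsCollider i → Anc G Z (r.nodes i)) ∧
    (¬ r.IsCollider i →
      r.nodes i ∉ Z ∨
      (r.steps (i - 1) = Step.un ∧ r.steps i = Step.un ∧
        ((∃ p, G.dir p (r.nodes i) ∧ p ∉ Z) ∨ ∃ s, G.bidir s (r.nodes i))))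

/-- Route-based connection criterion given `Z`. -/
def Route.RouteConnecting (r : Route G α β) (Z : Set V) : Prop :=
  ∀ i, 0 < i → i < r.n →
    (r.IsCollider i → r.nodes i ∈ Z) ∧
    (¬ r.IsCollider i →
      r.nodes i ∉ Z ∨
      (r.steps (i - 1) = Step.un ∧ r.steps i = Step.un ∧ ∃ s, G.bidir s (r.nodes i)))

/-- A route is a path when its nodes are all distinct. -/
def Route.IsPath (r : Route G α β) : Prop :=
  ∀ i j, i ≤ r.n → j ≤ r.n → r.nodes i = r.nodes j → i = j

/-- A directed route from `α` to `β` (all edges directed towards `β`). -/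
def Route.AllFwd (r : Route G α β) : Prop := ∀ i, i < r.n → r.steps i = Step.fwd

/-- `X` is separated from `Y` given `Z`: no connecting path between them. -/
def Separated (G : MixedGraph V) (X Y Z : Set V) : Prop :=
  ∀ a ∈ X, ∀ b ∈ Y, ¬ ∃ r : Route G a b, r.IsPath ∧ r.PathConnecting Z

/-- There is an undirected path `a − v₁ − … − vₙ − b` with all `vᵢ ∈ S`, `n ≥ 1`. -/
def UndirThrough (G : MixedGraph V) (S : Set V) (a b : V) : Prop :=
  ∃ c d, c ∈ S ∧ d ∈ S ∧ G.undir a c ∧ G.undir d b ∧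
    Relation.ReflTransGen (fun x y => x ∈ S ∧ y ∈ S ∧ G.undir x y) c d

/-- The intervention of `X` on `G`: delete directed/bidirected edges into `X`,
add undirected shortcuts through `X`, delete undirected edges at `X`. -/
def intervene (G : MixedGraph V) (X : Set V) : MixedGraph V where
  dir a b := G.dir a b ∧ b ∉ X
  bidir a b := G.bidir a b ∧ a ∉ X ∧ b ∉ X
  undir a b := a ∉ X ∧ b ∉ X ∧ (G.undir a b ∨ UndirThrough G X a b)

/-- Adjacency by an edge of any type. -/
def Adjacent (G : MixedGraph V) (a b : V) : Prop :=
  G.dir a b ∨ G.dir b a ∨ G.undir a b ∨ G.undir b a ∨ G.bidir a b ∨ G.bidir b a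

/-- Delete all directed edges into and out of `X`. -/
def dropDirAt (G : MixedGraph V) (X : Set V) : MixedGraph V where
  dir a b := G.dir a b ∧ a ∉ X ∧ b ∉ X
  undir := G.undir
  bidir := G.bidir

/-- Induced subgraph on `W`. -/
def induce (G : MixedGraph V) (W : Set V) : MixedGraph V where
  dir a b := a ∈ W ∧ b ∈ W ∧ G.dir a b
  undir a b := a ∈ W ∧ b ∈ W ∧ G.undir a b
  bidir a b := a ∈ W ∧ b ∈ W ∧ G.bidir a b

/-- The marginal graph `G^X`: edges among `X`, with undirected edges added for
undirected paths through `Xᶜ`. -/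
def marginal (G : MixedGraph V) (X : Set V) : MixedGraph V where
  dir a b := a ∈ X ∧ b ∈ X ∧ G.dir a b
  bidir a b := a ∈ X ∧ b ∈ X ∧ G.bidir a b
  undir a b := a ∈ X ∧ b ∈ X ∧ (G.undir a b ∨ UndirThrough G Xᶜ a b)

/-- `W'` is an ancestral set. -/
def Ancestral (G : MixedGraph V) (W' : Set V) : Prop :=
  ∀ a b, G.dir a b → b ∈ W' → a ∈ W'

/-- `a` and `b` are joined by an undirected path lying within `W`. -/
def uconnIn (G : MixedGraph V) (W : Set V) (a b : V) : Prop :=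
  a ∈ W ∧ b ∈ W ∧ Relation.ReflTransGen (fun x y => x ∈ W ∧ y ∈ W ∧ G.undir x y) a b

/-- `𝒮` is the set of components of `W`: the equivalence classes of
undirected connectivity within the subgraph induced by `W`. -/
def IsComponents (G : MixedGraph V) (W : Set V) (𝒮 : Finset (Finset V)) : Prop :=
  (∀ S ∈ 𝒮, ∃ a ∈ W, ∀ b, b ∈ S ↔ uconnIn G W a b) ∧
  (∀ a ∈ W, ∃ S ∈ 𝒮, a ∈ S) ∧
  (∀ S ∈ 𝒮, ∀ T ∈ 𝒮, S ≠ T → Disjoint S T)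

/-- `L` is a topological order of `W` with respect to the directed part of `G`. -/
def TopOrder [DecidableEq V] (G : MixedGraph V) (W : Set V) (L : List V) : Prop :=
  L.Nodup ∧ (∀ v, v ∈ L ↔ v ∈ W) ∧
  ∀ a b, a ∈ W → b ∈ W → G.dir a b → L.idxOf a < L.idxOf b

/-- The predecessors of `a` in the order `L`. -/
def predSet [DecidableEq V] (L : List V) (a : V) : Set V :=
  {b | b ∈ L ∧ L.idxOf b < L.idxOf a}

/-- Ancestors of the set `Y` (including `Y`). -/
def AnSet (G : MixedGraph V) (Y : Set V) : Set V :=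
  {a | ∃ y ∈ Y, Relation.ReflTransGen G.dir a y}

/-- Descendants of `a` (including `a`). -/
def Desc (G : MixedGraph V) (a b : V) : Prop := Relation.ReflTransGen G.dir a b

/-- The magnification of an ADMG: `A ↔ B` becomes `A ← λ_{AB} → B`,
every `A` gets `ε_A → A`, and `A − B` becomes `ε_A − ε_B`.
Nodes: `Sum.inl a` original, `Sum.inr (Sum.inl a)` is `ε_a`,
`Sum.inr (Sum.inr p)` is `λ_p`. -/
def magnify (G : MixedGraph V) : MixedGraph (V ⊕ (V ⊕ Sym2 V)) where
  dir x y :=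
    match x, y with
    | Sum.inl a, Sum.inl b => G.dir a b
    | Sum.inr (Sum.inl a), Sum.inl b => a = b
    | Sum.inr (Sum.inr p), Sum.inl b => ∃ c, p = s(b, c) ∧ G.bidir b c
    | _, _ => False
  undir x y :=
    match x, y with
    | Sum.inr (Sum.inl a), Sum.inr (Sum.inl b) => G.undir a b
    | _, _ => False
  bidir _ _ := False

/-- Replacing each bidirected edge `A ↔ B` with `A ← λ_{AB} → B` only. -/
def magBi (G : MixedGraph V) : MixedGraph (V ⊕ Sym2 V) where
  dir x y :=
    match x, y with
    | Sum.inl a, Sum.inl b => G.dir a b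
    | Sum.inr p, Sum.inl b => ∃ c, p = s(b, c) ∧ G.bidir b c
    | _, _ => False
  undir x y :=
    match x, y with
    | Sum.inl a, Sum.inl b => G.undir a b
    | _, _ => False
  bidir _ _ := False

/-- The back-door criterion of the set `S` relative to `(Xs, Ys)`:
`S` contains no descendant of `Xs` and blocks every non-directed path
from `Xs` to `Ys`. -/
def BackDoor (G : MixedGraph V) (S Xs Ys : Set V) : Prop :=
  (∀ a ∈ Xs, ∀ v ∈ S, ¬ Desc G a v) ∧
  (∀ a ∈ Xs, ∀ b ∈ Ys, ∀ r : Route G a b, r.IsPath → ¬ r.AllFwd →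
    ¬ r.PathConnecting S)

section SEM

variable [Fintype V]

/-- Integral over assignments of real values to the coordinates in `S`. -/
def intOver (S : Set V) (g : ((↥S) → ℝ) → ℝ) : ℝ :=
  letI : Fintype ↥S := Fintype.ofFinite _
  ∫ z : (↥S) → ℝ, g z

/-- Marginal density over the coordinates in `S`: integrate out `Sᶜ`. -/
def marg (p : (V → ℝ) → ℝ) (S : Set V) (x : V → ℝ) : ℝ :=
  intOver (Sᶜ) (fun y => p (fun v => if h : v ∈ Sᶜ then y ⟨v, h⟩ else x v))

/-- Override the assignment `x` on `S` by `z`. -/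
def ovr (x : V → ℝ) (S : Set V) (z : (↥S) → ℝ) : V → ℝ :=
  fun v => if h : v ∈ S then z ⟨v, h⟩ else x v

/-- Multivariate Gaussian density with mean 0 and precision matrix `Sinv`. -/
def gaussDensity (Sinv : Matrix V V ℝ) (u : V → ℝ) : ℝ :=
  Real.sqrt (Sinv.det / (2 * Real.pi) ^ (Fintype.card V)) *
    Real.exp (-(∑ i, ∑ j, u i * Sinv i j * u j) / 2)

/-- A causal model of an aADMG `G`: structural equations `A = f_A(Pa(A)) + ε_A`
with jointly Gaussian errors whose precision matrix has zeros for missing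
undirected edges. -/
structure GaussSEM (G : MixedGraph V) where
  f : V → (V → ℝ) → ℝ
  f_parents : ∀ A x y, (∀ B, G.dir B A → x B = y B) → f A x = f A y
  Sinv : Matrix V V ℝ
  symm : Sinv.IsSymm
  posdef : Sinv.PosDef
  zeros : ∀ A B, A ≠ B → ¬ G.undir A B → Sinv A B = 0

namespace GaussSEM

variable {G : MixedGraph V} (M : GaussSEM G)

/-- Error density. -/
def q : (V → ℝ) → ℝ := gaussDensity M.Sinv

/-- Error values recovered from an assignment. -/
def errs (x : V → ℝ) : V → ℝ := fun i => x i - M.f i x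

/-- Observational joint density over `V`. -/
def obs (x : V → ℝ) : ℝ := M.q (M.errs x)

/-- Observational conditional density `p(A | B)`. -/
def cond (A B : Set V) (x : V → ℝ) : ℝ :=
  marg M.obs (A ∪ B) x / marg M.obs B x

/-- Post-interventional density of `V \ Xset` under `do(Xset := x on Xset)`:
the errors of the intervened variables are marginalized out. -/
def doDensity (Xset : Set V) (x : V → ℝ) : ℝ :=
  marg M.q (Xsetᶜ) (M.errs x)

/-- Post-interventional conditional density `p(A | do(Xset), B)`. -/
def doCond (Xset A B : Set V) (x : V → ℝ) : ℝ :=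
  marg (M.doDensity Xset) (Xset ∪ A ∪ B) x / marg (M.doDensity Xset) (Xset ∪ B) x

/-- Conditional density of the errors in `A` given the errors in `B`. -/
def qcond (A B : Set V) (u : V → ℝ) : ℝ :=
  marg M.q (A ∪ B) u / marg M.q B u

/-- The factor `Q(S | W')`: conditional density of the errors of `S` given the
errors of `W'`, evaluated at the errors recovered from the assignment. -/
def QFactor (S W' : Set V) (x : V → ℝ) : ℝ := M.qcond S W' (M.errs x)

end GaussSEM

/-- A causal effect (a functional of the model) is identifiable when it is a
fixed functional of the observational density, uniformly over all models of `G`. -/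
def Identifiable (G : MixedGraph V) (eff : GaussSEM G → (V → ℝ) → ℝ) : Prop :=
  ∃ F : ((V → ℝ) → ℝ) → (V → ℝ) → ℝ, ∀ M : GaussSEM G, eff M = F M.obs

end SEM

end MixedGraph

section Rule1Aux

open MixedGraph

variable {V : Type*}

private def collPair (sl sr : Step) : Prop :=
  (headInto sl ∨ headOut sr) ∧ (headInto sl ∨ sl = Step.un) ∧ (headOut sr ∨ sr = Step.un)

private def good (H : MixedGraph V) (S : Set V) (sl sr : Step) (v : V) : Prop :=
  (collPair sl sr → Anc H S v) ∧
  (¬ collPair sl sr → v ∉ S ∨ (sl = Step.un ∧ sr = Step.un ∧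
      ((∃ p, H.dir p v ∧ p ∉ S) ∨ ∃ s, H.bidir s v)))

private lemma pc_iff {H : MixedGraph V} {α β : V} (r : Route H α β) (S : Set V) :
    r.PathConnecting S ↔
      ∀ i, 0 < i → i < r.n → good H S (r.steps (i - 1)) (r.steps i) (r.nodes i) :=
  Iff.rfl

private lemma collPair_unun : ¬ collPair Step.un Step.un := by
  simp [collPair, headInto, headOut]

private lemma collPair_bwdfwd : ¬ collPair Step.bwd Step.fwd := by
  simp [collPair, headInto, headOut]

/-- The intermediate graph: directed edges avoiding `X`, undirected closure through `X`. -/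
private def gmx (G : MixedGraph V) (X : Set V) : MixedGraph V where
  dir a b := G.dir a b ∧ a ∉ X ∧ b ∉ X
  undir a b := G.undir a b ∨ UndirThrough G X a b
  bidir _ _ := False

private lemma ut_comp {G : MixedGraph V} {X : Set V} {a x b : V} (hx : x ∈ X)
    (h1 : G.undir a x ∨ UndirThrough G X a x)
    (h2 : G.undir x b ∨ UndirThrough G X x b) :
    UndirThrough G X a b := by
  rcases h1 with h1 | ⟨c, d, hc, hd, hac, hdx, hch⟩ <;>
    rcases h2 with h2 | ⟨c', d', hc', hd', hxc', hd'b, hch'⟩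
  · exact ⟨x, x, hx, hx, h1, h2, Relation.ReflTransGen.refl⟩
  · exact ⟨x, d', hx, hd', h1, hd'b, Relation.ReflTransGen.head ⟨hx, hc', hxc'⟩ hch'⟩
  · exact ⟨c, x, hc, hx, hac, h2, hch.tail ⟨hd, hx, hdx⟩⟩
  · exact ⟨c, d', hc, hd', hac, hd'b,
      ((hch.tail ⟨hd, hx, hdx⟩).tail ⟨hx, hc', hxc'⟩).trans hch'⟩

private def XInj (X : Set V) {H : MixedGraph V} {α β : V} (r : Route H α β) : Prop :=
  ∀ k1 k2, k1 ≤ r.n → k2 ≤ r.n → r.nodes k1 = r.nodes k2 → r.nodes k1 ∉ X → k1 = k2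

private def NodesIn (X N : Set V) {H : MixedGraph V} {α β : V} (r : Route H α β) : Prop :=
  ∀ k, k ≤ r.n → r.nodes k ∉ X → r.nodes k ∈ N

private lemma nodesin_mono {X N N' : Set V} {H : MixedGraph V} {α β : V} {r : Route H α β}
    (h : NodesIn X N r) (hNN : N ⊆ N') : NodesIn X N' r :=
  fun k hk hx => hNN (h k hk hx)

private lemma single_route {H : MixedGraph V} (S : Set V) {a b : V} (s : Step)
    (h : StepValid H a s b) :
    ∃ r : Route H a b, r.n = 1 ∧ r.steps 0 = s ∧
      (∀ k, r.nodes k = if k = 0 then a else b) ∧ r.PathConnecting S := by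
  refine ⟨⟨1, one_pos, fun k => if k = 0 then a else b, fun _ => s, by simp, by simp, ?_⟩,
    rfl, rfl, fun k => rfl, ?_⟩
  · intro i hi
    have : i = 0 := by omega
    subst this
    simpa using h
  · intro i h1 h2
    simp only at h2
    omega

private lemma prepend_route {H : MixedGraph V} {S : Set V} {b z : V} (r : Route H b z)
    (a : V) (s : Step) (hs : StepValid H a s b) (hpc : r.PathConnecting S)
    (hg : good H S s (r.steps 0) b) :
    ∃ r2 : Route H a z, r2.n = r.n + 1 ∧ r2.steps 0 = s ∧
      (∀ k, r2.nodes k = if k = 0 then a else r.nodes (k - 1)) ∧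
      r2.PathConnecting S := by
  have hfirst : r.nodes 0 = b := r.first
  refine ⟨⟨r.n + 1, by omega,
      fun k => if k = 0 then a else r.nodes (k - 1),
      fun k => if k = 0 then s else r.steps (k - 1), by simp, ?_, ?_⟩,
    rfl, rfl, fun k => rfl, ?_⟩
  · simp only [Nat.succ_ne_zero, if_neg, Nat.add_sub_cancel]
    exact r.last
  · intro i hi
    by_cases h0 : i = 0
    · subst h0
      simpa [hfirst] using hs
    · have h1 : i - 1 < r.n := by omega
      have hv := r.valid (i - 1) h1
      rw [show i - 1 + 1 = i from by omega] at hv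
      simp only [if_neg h0, if_neg (by omega : i + 1 ≠ 0)]
      rw [show i + 1 - 1 = i from by omega]
      exact hv
  · rw [pc_iff]
    intro i hi hin
    simp only at hin ⊢
    by_cases h1 : i = 1
    · subst h1
      simpa [hfirst] using hg
    · have h2 : 2 ≤ i := by omega
      have := (pc_iff r S).mp hpc (i - 1) (by omega) (by omega)
      simp only [if_neg (by omega : i - 1 ≠ 0), if_neg (by omega : i ≠ 0)]
      rw [show i - 1 - 1 = i - 1 - 1 from rfl]
      convert this using 3 <;> omega

private lemma xinj_of_prepend {H : MixedGraph V} {a b z : V} {X : Set V}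
    (r : Route H b z) (r2 : Route H a z)
    (hn : r2.n = r.n + 1) (hd : ∀ k, r2.nodes k = if k = 0 then a else r.nodes (k - 1))
    (hr : XInj X r) (ha : a ∈ X ∨ ∀ k, k ≤ r.n → r.nodes k ≠ a) : XInj X r2 := by
  intro k1 k2 h1 h2 heq hnx
  rw [hn] at h1 h2
  rw [hd k1, hd k2] at heq
  rw [hd k1] at hnx
  by_cases e1 : k1 = 0 <;> by_cases e2 : k2 = 0
  · omega
  · rw [if_pos e1] at heq hnx
    rw [if_neg e2] at heq
    rcases ha with ha | ha
    · exact absurd ha hnx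
    · exact absurd heq.symm (ha (k2 - 1) (by omega))
  · rw [if_neg e1] at heq hnx
    rw [if_pos e2] at heq
    rcases ha with ha | ha
    · exact absurd (heq ▸ ha) hnx
    · exact absurd heq (ha (k1 - 1) (by omega))
  · rw [if_neg e1] at heq hnx
    rw [if_neg e2] at heq
    have := hr (k1 - 1) (k2 - 1) (by omega) (by omega) heq hnx
    omega

private lemma nodesin_of_prepend {H : MixedGraph V} {a b z : V} {X N N2 : Set V}
    (r : Route H b z) (r2 : Route H a z)
    (hn : r2.n = r.n + 1) (hd : ∀ k, r2.nodes k = if k = 0 then a else r.nodes (k - 1))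
    (hr : NodesIn X N r) (hNN : N ⊆ N2) (haN : a ∉ X → a ∈ N2) : NodesIn X N2 r2 := by
  intro k hk hx
  rw [hn] at hk
  rw [hd k] at hx ⊢
  by_cases e : k = 0
  · rw [if_pos e] at hx ⊢
    exact haN hx
  · rw [if_neg e] at hx ⊢
    exact hNN (hr (k - 1) (by omega) hx)

/-- In `gmx`, both steps at an interior node in `X` are undirected. -/
private lemma gm_un_at_X {G : MixedGraph V} {X : Set V} {α β : V}
    (r : Route (gmx G X) α β) {i : ℕ} (h0 : 0 < i) (hn : i < r.n)
    (hx : r.nodes i ∈ X) : r.steps (i - 1) = Step.un ∧ r.steps i = Step.un := by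
  have h1 := r.valid (i - 1) (by omega)
  rw [show i - 1 + 1 = i from by omega] at h1
  have h2 := r.valid i hn
  constructor
  · rcases hs : r.steps (i - 1) <;> rw [hs] at h1
    · exact absurd hx h1.2.2
    · exact absurd hx h1.2.1
    · exact absurd h1 (by simp [StepValid, gmx])
  · rcases hs : r.steps i <;> rw [hs] at h2
    · exact absurd hx h2.2.1
    · exact absurd hx h2.2.2
    · exact absurd h2 (by simp [StepValid, gmx])

/-- In `dropDirAt`, both steps at an interior node in `X` are undirected. -/
private lemma dd_un_at_X {G : MixedGraph V} (hnb : NoBidirected G) {X : Set V} {α β : V}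
    (r : Route (dropDirAt G X) α β) {i : ℕ} (h0 : 0 < i) (hn : i < r.n)
    (hx : r.nodes i ∈ X) : r.steps (i - 1) = Step.un ∧ r.steps i = Step.un := by
  have h1 := r.valid (i - 1) (by omega)
  rw [show i - 1 + 1 = i from by omega] at h1
  have h2 := r.valid i hn
  constructor
  · rcases hs : r.steps (i - 1) <;> rw [hs] at h1
    · exact absurd hx h1.2.2
    · exact absurd hx h1.2.1
    · exact absurd h1 (hnb _ _)
  · rcases hs : r.steps i <;> rw [hs] at h2
    · exact absurd hx h2.2.1
    · exact absurd hx h2.2.2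
    · exact absurd h2 (hnb _ _)

/-- All nodes of a connecting route in the intervened graph avoid `X`. -/
private lemma gi_notX {G : MixedGraph V} (hnb : NoBidirected G) {X W : Set V} {y z : V}
    (r : Route (intervene G X) y z) (hy : y ∉ X) (hz : z ∉ X)
    (hpc : r.PathConnecting (X ∪ W)) : ∀ k, k ≤ r.n → r.nodes k ∉ X := by
  intro k hk hx
  by_cases e0 : k = 0
  · exact hy (by rwa [e0, r.first] at hx)
  by_cases en : k = r.n
  · exact hz (by rwa [en, r.last] at hx)
  have h0 : 0 < k := by omega
  have hkn : k < r.n := by omega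
  have h1 := r.valid (k - 1) (by omega)
  rw [show k - 1 + 1 = k from by omega] at h1
  have h2 := r.valid k hkn
  have hs1 : r.steps (k - 1) = Step.bwd := by
    rcases hs : r.steps (k - 1) <;> rw [hs] at h1
    · exact absurd hx h1.2
    · exact absurd h1.1 (hnb _ _)
    · exact absurd hx h1.2.1
  have hs2 : r.steps k = Step.fwd := by
    rcases hs : r.steps k <;> rw [hs] at h2
    · exact absurd hx h2.2
    · exact absurd h2.1 (hnb _ _)
    · exact absurd hx h2.1
  have hg := (pc_iff r (X ∪ W)).mp hpc k h0 hkn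
  rw [hs1, hs2] at hg
  rcases hg.2 collPair_bwdfwd with h | ⟨h, _⟩
  · exact h (Or.inl hx)
  · simp at h

/-- Ancestor transfer from the intervened graph to `gmx`. -/
private lemma anc_gm_of_gi {G : MixedGraph V} {X W : Set V} {v : V}
    (hv : v ∉ X) (h : Anc (intervene G X) (X ∪ W) v) : Anc (gmx G X) W v := by
  obtain ⟨t, ht, hrt⟩ := h
  have key : ∀ {a : V}, Relation.ReflTransGen (intervene G X).dir a t → a ∉ X →
      Relation.ReflTransGen (gmx G X).dir a t ∧ t ∉ X := by
    intro a hrt2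
    induction hrt2 using Relation.ReflTransGen.head_induction_on with
    | refl => exact fun ha => ⟨Relation.ReflTransGen.refl, ha⟩
    | head h' _ ih =>
      intro ha
      have hc := h'.2
      exact ⟨Relation.ReflTransGen.head ⟨h'.1, ha, hc⟩ (ih hc).1, (ih hc).2⟩
  obtain ⟨hrt', htX⟩ := key hrt hv
  exact ⟨t, ht.resolve_left htX, hrt'⟩

private lemma anc_gi_of_gm {G : MixedGraph V} {X W : Set V} {v : V}
    (h : Anc (gmx G X) W v) : Anc (intervene G X) (X ∪ W) v := by
  obtain ⟨t, ht, hrt⟩ := h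
  exact ⟨t, Or.inr ht, Relation.ReflTransGen.mono
    (fun a b hab => ⟨hab.1, hab.2.2⟩ : ∀ a b, (gmx G X).dir a b → (intervene G X).dir a b) _ _ hrt⟩

private lemma good_gm_of_gd {G : MixedGraph V} (hnb : NoBidirected G) {X W : Set V}
    {sl sr : Step} {v : V} (h : good (dropDirAt G X) W sl sr v) : good (gmx G X) W sl sr v := by
  refine ⟨fun hc => h.1 hc, fun hc => ?_⟩
  rcases h.2 hc with h' | ⟨hl, hr, hex⟩
  · exact Or.inl h'
  · refine Or.inr ⟨hl, hr, ?_⟩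
    rcases hex with ⟨p, hp, hpw⟩ | ⟨s, hs⟩
    · exact Or.inl ⟨p, hp, hpw⟩
    · exact absurd hs (hnb _ _)

private lemma good_gd_of_gm {G : MixedGraph V} {X W : Set V}
    {sl sr : Step} {v : V} (h : good (gmx G X) W sl sr v) : good (dropDirAt G X) W sl sr v := by
  refine ⟨fun hc => h.1 hc, fun hc => ?_⟩
  rcases h.2 hc with h' | ⟨hl, hr, hex⟩
  · exact Or.inl h'
  · refine Or.inr ⟨hl, hr, ?_⟩
    rcases hex with ⟨p, hp, hpw⟩ | ⟨s, hs⟩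
    · exact Or.inl ⟨p, hp, hpw⟩
    · exact hs.elim

private lemma good_gi_of_gm {G : MixedGraph V} {X W : Set V}
    {sl sr : Step} {v : V} (hv : v ∉ X) (h : good (gmx G X) W sl sr v) :
    good (intervene G X) (X ∪ W) sl sr v := by
  refine ⟨fun hc => anc_gi_of_gm (h.1 hc), fun hc => ?_⟩
  rcases h.2 hc with h' | ⟨hl, hr, hex⟩
  · exact Or.inl (by simp [hv, h'])
  · refine Or.inr ⟨hl, hr, ?_⟩
    rcases hex with ⟨p, hp, hpw⟩ | ⟨s, hs⟩
    · exact Or.inl ⟨p, ⟨hp.1, hp.2.2⟩, by simp [hp.2.1, hpw]⟩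
    · exact hs.elim

private lemma good_gm_of_gi {G : MixedGraph V} (hnb : NoBidirected G) {X W : Set V}
    {sl sr : Step} {v : V} (hv : v ∉ X) (h : good (intervene G X) (X ∪ W) sl sr v) :
    good (gmx G X) W sl sr v := by
  refine ⟨fun hc => anc_gm_of_gi hv (h.1 hc), fun hc => ?_⟩
  rcases h.2 hc with h' | ⟨hl, hr, hex⟩
  · exact Or.inl fun hw => h' (Or.inr hw)
  · refine Or.inr ⟨hl, hr, ?_⟩
    rcases hex with ⟨p, hp, hpw⟩ | ⟨s, hs⟩
    · exact Or.inl ⟨p, ⟨hp.1, fun hX => hpw (Or.inl hX), hv⟩, fun hW => hpw (Or.inr hW)⟩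
    · exact absurd hs.1 (hnb _ _)

private lemma chain_prepend {G : MixedGraph V} {X W N : Set V} (hXW : ∀ v ∈ X, v ∉ W) {z : V}
    {c d : V} (hch : Relation.ReflTransGen (fun x y => x ∈ X ∧ y ∈ X ∧ G.undir x y) c d)
    (ρ : Route (dropDirAt G X) d z) (h0 : ρ.steps 0 = Step.un) (hpc : ρ.PathConnecting W)
    (hxi : XInj X ρ) (hni : NodesIn X N ρ) :
    ∃ ρ' : Route (dropDirAt G X) c z, ρ'.steps 0 = Step.un ∧ ρ'.PathConnecting W ∧
      XInj X ρ' ∧ NodesIn X N ρ' := by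
  induction hch using Relation.ReflTransGen.head_induction_on with
  | refl => exact ⟨ρ, h0, hpc, hxi, hni⟩
  | @head a c h' hrest ih =>
    obtain ⟨ρ', hs0, hpc', hxi', hni'⟩ := ih
    obtain ⟨h1X, h2X, hu⟩ := h'
    have hg : good (dropDirAt G X) W Step.un (ρ'.steps 0) c := by
      rw [hs0]
      exact ⟨fun hc => absurd hc collPair_unun, fun _ => Or.inl (hXW _ h2X)⟩
    obtain ⟨ρ2, hn2, hs2, hd2, hpc2⟩ :=
      prepend_route ρ' _ Step.un (show StepValid (dropDirAt G X) _ Step.un _ from hu) hpc' hg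
    exact ⟨ρ2, hs2, hpc2, xinj_of_prepend ρ' ρ2 hn2 hd2 hxi' (Or.inl h1X),
      nodesin_of_prepend ρ' ρ2 hn2 hd2 hni' subset_rfl (fun hx => absurd h1X hx)⟩

private lemma chain_block {G : MixedGraph V} {X W : Set V} (hXW : ∀ v ∈ X, v ∉ W)
    {y c d z : V} {N : Set V} (hcX : c ∈ X) (hyc : G.undir y c)
    (hch : Relation.ReflTransGen (fun x y => x ∈ X ∧ y ∈ X ∧ G.undir x y) c d)
    (hyX : y ∉ X) (hyN : ∀ v ∈ N, v ≠ y)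
    (ρ : Route (dropDirAt G X) d z) (h0 : ρ.steps 0 = Step.un) (hpc : ρ.PathConnecting W)
    (hxi : XInj X ρ) (hni : NodesIn X N ρ) :
    ∃ r' : Route (dropDirAt G X) y z, r'.steps 0 = Step.un ∧ r'.PathConnecting W ∧
      XInj X r' ∧ NodesIn X (insert y N) r' := by
  obtain ⟨ρc, hs0, hpc', hxi', hni'⟩ := chain_prepend hXW hch ρ h0 hpc hxi hni
  have hg : good (dropDirAt G X) W Step.un (ρc.steps 0) c := by
    rw [hs0]
    exact ⟨fun hc' => absurd hc' collPair_unun, fun _ => Or.inl (hXW _ hcX)⟩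
  obtain ⟨r2, hn2, hs2, hd2, hpc2⟩ :=
    prepend_route ρc y Step.un (show StepValid (dropDirAt G X) y Step.un c from hyc) hpc' hg
  refine ⟨r2, hs2, hpc2, xinj_of_prepend ρc r2 hn2 hd2 hxi' (Or.inr fun k hk hkeq => ?_),
    nodesin_of_prepend ρc r2 hn2 hd2 hni' (Set.subset_insert _ _) (fun _ => Set.mem_insert _ _)⟩
  by_cases hkX : ρc.nodes k ∈ X
  · exact hyX (hkeq ▸ hkX)
  · exact hyN _ (hni' k hk hkX) hkeq

private lemma xinj_single {H : MixedGraph V} {X : Set V} {a b : V} (r : Route H a b)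
    (hn : r.n = 1) (hd : ∀ k, r.nodes k = if k = 0 then a else b) (hab : a ≠ b) : XInj X r := by
  intro k1 k2 h1 h2 heq _
  rw [hn] at h1 h2
  rw [hd k1, hd k2] at heq
  by_cases e1 : k1 = 0 <;> by_cases e2 : k2 = 0
  · omega
  · rw [if_pos e1, if_neg e2] at heq
    exact absurd heq hab
  · rw [if_neg e1, if_pos e2] at heq
    exact absurd heq.symm hab
  · omega

private lemma nodesin_single {H : MixedGraph V} {X N : Set V} {a b : V} (r : Route H a b)
    (hd : ∀ k, r.nodes k = if k = 0 then a else b)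
    (ha : a ∉ X → a ∈ N) (hb : b ∉ X → b ∈ N) : NodesIn X N r := by
  intro k hk hx
  rw [hd k] at hx ⊢
  split_ifs at hx ⊢ with h
  · exact ha hx
  · exact hb hx

private lemma tail_route {H : MixedGraph V} {y z : V} (r : Route H y z) (h2 : 2 ≤ r.n) :
    ∃ tr : Route H (r.nodes 1) z, tr.n = r.n - 1 ∧ (∀ k, tr.nodes k = r.nodes (k + 1)) ∧
      (∀ k, tr.steps k = r.steps (k + 1)) := by
  refine ⟨⟨r.n - 1, by omega, fun k => r.nodes (k + 1), fun k => r.steps (k + 1), rfl, ?_, ?_⟩,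
    rfl, fun _ => rfl, fun _ => rfl⟩
  · show r.nodes (r.n - 1 + 1) = z
    rw [show r.n - 1 + 1 = r.n from by omega]
    exact r.last
  · intro k hk
    exact r.valid (k + 1) (by omega)

private lemma expand {G : MixedGraph V} {X W : Set V} (hXW : ∀ v ∈ X, v ∉ W) :
    ∀ n (y z : V) (r : Route (gmx G X) y z), r.n = n →
      (∀ k, k ≤ r.n → r.nodes k ∉ X) → r.IsPath → r.PathConnecting W →
      ∃ r' : Route (dropDirAt G X) y z, r'.steps 0 = r.steps 0 ∧ r'.PathConnecting W ∧
        XInj X r' ∧ NodesIn X {v | ∃ j, j ≤ r.n ∧ v = r.nodes j} r' := by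
  intro n
  induction n using Nat.strong_induction_on with
  | _ n IH =>
  intro y z r hn hall hpath hpc
  have hfirst := r.first
  have hyX : y ∉ X := by rw [← hfirst]; exact hall 0 (by omega)
  have hnpos := r.npos
  by_cases hb : r.n = 1
  · -- base case
    have hz1 : r.nodes 1 = z := by have := r.last; rwa [hb] at this
    have hzX : z ∉ X := by rw [← hz1]; exact hall 1 (by omega)
    have hyz : y ≠ z := by
      intro h
      have := hpath 0 1 (by omega) (by omega) (by rw [hfirst, hz1, h])
      omega
    have hv0 := r.valid 0 (by omega)
    rw [hfirst, hz1] at hv0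
    have hNsub : ∀ u : V, (u = y ∨ u = z) → u ∈ {v | ∃ j, j ≤ r.n ∧ v = r.nodes j} := by
      rintro u (rfl | rfl)
      · exact ⟨0, by omega, hfirst.symm⟩
      · exact ⟨1, by omega, hz1.symm⟩
    rcases hs : r.steps 0 <;> rw [hs] at hv0
    · -- fwd
      obtain ⟨r0, hn0, hs0, hd0, hpc0⟩ :=
        single_route (H := dropDirAt G X) W Step.fwd (show StepValid (dropDirAt G X) y Step.fwd z from hv0)
      exact ⟨r0, hs0, hpc0, xinj_single r0 hn0 hd0 hyz,
        nodesin_single r0 hd0 (fun _ => hNsub y (Or.inl rfl)) (fun _ => hNsub z (Or.inr rfl))⟩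
    · -- bwd
      obtain ⟨r0, hn0, hs0, hd0, hpc0⟩ :=
        single_route (H := dropDirAt G X) W Step.bwd (show StepValid (dropDirAt G X) y Step.bwd z from hv0)
      exact ⟨r0, hs0, hpc0, xinj_single r0 hn0 hd0 hyz,
        nodesin_single r0 hd0 (fun _ => hNsub y (Or.inl rfl)) (fun _ => hNsub z (Or.inr rfl))⟩
    · exact hv0.elim
    · -- un
      rcases hv0 with hu | ⟨c, d, hcX, hdX, hyc, hdz, hch⟩
      · obtain ⟨r0, hn0, hs0, hd0, hpc0⟩ :=
          single_route (H := dropDirAt G X) W Step.un (show StepValid (dropDirAt G X) y Step.un z from hu)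
        exact ⟨r0, hs0, hpc0, xinj_single r0 hn0 hd0 hyz,
          nodesin_single r0 hd0 (fun _ => hNsub y (Or.inl rfl)) (fun _ => hNsub z (Or.inr rfl))⟩
      · obtain ⟨ρ0, hn0, hs0, hd0, hpc0⟩ :=
          single_route (H := dropDirAt G X) W Step.un (show StepValid (dropDirAt G X) d Step.un z from hdz)
        have hxi0 : XInj X ρ0 := xinj_single ρ0 hn0 hd0 (fun h => hzX (h ▸ hdX))
        have hni0 : NodesIn X {z} ρ0 :=
          nodesin_single ρ0 hd0 (fun h => absurd hdX h) (fun _ => rfl)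
        obtain ⟨r', hs', hpc', hxi', hni'⟩ :=
          chain_block hXW hcX hyc hch hyX
            (fun v hv => by rw [Set.mem_singleton_iff] at hv; exact hv ▸ hyz.symm)
            ρ0 hs0 hpc0 hxi0 hni0
        refine ⟨r', hs', hpc', hxi', nodesin_mono hni' ?_⟩
        rintro u hu
        rcases Set.mem_insert_iff.mp hu with rfl | hu
        · exact hNsub u (Or.inl rfl)
        · rw [Set.mem_singleton_iff] at hu
          exact hNsub u (Or.inr hu)
  · -- inductive case, r.n ≥ 2
    have h2 : 2 ≤ r.n := by omega
    obtain ⟨tr, htn, htnodes, htsteps⟩ := tail_route r h2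
    have hall' : ∀ k, k ≤ tr.n → tr.nodes k ∉ X := by
      intro k hk
      rw [htn] at hk
      rw [htnodes]
      exact hall (k + 1) (by omega)
    have hpath' : tr.IsPath := by
      intro i j hi hj heq
      rw [htn] at hi hj
      rw [htnodes, htnodes] at heq
      have := hpath (i + 1) (j + 1) (by omega) (by omega) heq
      omega
    have hpc' : tr.PathConnecting W := by
      rw [pc_iff]
      intro i hi hin
      rw [htn] at hin
      rw [htsteps, htsteps, htnodes]
      rw [show i - 1 + 1 = i from by omega]
      have := (pc_iff r W).mp hpc (i + 1) (by omega) (by omega)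
      rw [show i + 1 - 1 = i from by omega] at this
      exact this
    obtain ⟨r', hs', hpc'', hxi', hni'⟩ := IH (r.n - 1) (by omega) (r.nodes 1) z tr htn hall' hpath' hpc'
    have hs'1 : r'.steps 0 = r.steps 1 := by rw [hs', htsteps]
    have hniT : NodesIn X {v | ∃ j, 1 ≤ j ∧ j ≤ r.n ∧ v = r.nodes j} r' := by
      refine nodesin_mono hni' ?_
      rintro v ⟨j, hj, hv⟩
      rw [htn] at hj
      rw [htnodes] at hv
      exact ⟨j + 1, by omega, by omega, hv⟩
    have hyT : ∀ v ∈ {v | ∃ j, 1 ≤ j ∧ j ≤ r.n ∧ v = r.nodes j}, v ≠ y := by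
      rintro v ⟨j, hj1, hj2, rfl⟩ hvy
      have := hpath j 0 hj2 (by omega) (by rw [hfirst]; exact hvy)
      omega
    have hjg := (pc_iff r W).mp hpc 1 (by omega) (by omega)
    rw [show (1 : ℕ) - 1 = 0 from rfl] at hjg
    have hjd : good (dropDirAt G X) W (r.steps 0) (r'.steps 0) (r.nodes 1) := by
      rw [hs'1]
      exact good_gd_of_gm hjg
    have hv0 := r.valid 0 (by omega)
    rw [hfirst] at hv0
    have hsubN : {v | ∃ j, 1 ≤ j ∧ j ≤ r.n ∧ v = r.nodes j} ⊆ {v | ∃ j, j ≤ r.n ∧ v = r.nodes j} := by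
      rintro v ⟨j, _, hj, hv⟩
      exact ⟨j, hj, hv⟩
    have hyinN : y ∈ {v | ∃ j, j ≤ r.n ∧ v = r.nodes j} := ⟨0, by omega, hfirst.symm⟩
    have hnoty : ∀ k, k ≤ r'.n → r'.nodes k ≠ y := by
      intro k hk hkeq
      by_cases hkX : r'.nodes k ∈ X
      · exact hyX (hkeq ▸ hkX)
      · exact hyT _ (hniT k hk hkX) hkeq
    rcases hs : r.steps 0 <;> rw [hs] at hv0 hjd
    · -- fwd
      obtain ⟨r2, hn2, hs2, hd2, hpc2⟩ :=
        prepend_route r' y Step.fwd (show StepValid (dropDirAt G X) y Step.fwd (r.nodes 1) from hv0) hpc'' hjd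
      exact ⟨r2, hs2, hpc2,
        xinj_of_prepend r' r2 hn2 hd2 hxi' (Or.inr hnoty),
        nodesin_of_prepend r' r2 hn2 hd2 hniT hsubN (fun _ => hyinN)⟩
    · -- bwd
      obtain ⟨r2, hn2, hs2, hd2, hpc2⟩ :=
        prepend_route r' y Step.bwd (show StepValid (dropDirAt G X) y Step.bwd (r.nodes 1) from hv0) hpc'' hjd
      exact ⟨r2, hs2, hpc2,
        xinj_of_prepend r' r2 hn2 hd2 hxi' (Or.inr hnoty),
        nodesin_of_prepend r' r2 hn2 hd2 hniT hsubN (fun _ => hyinN)⟩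
    · exact hv0.elim
    · -- un
      rcases hv0 with hu | ⟨c, d, hcX, hdX, hyc, hdb, hch⟩
      · obtain ⟨r2, hn2, hs2, hd2, hpc2⟩ :=
          prepend_route r' y Step.un (show StepValid (dropDirAt G X) y Step.un (r.nodes 1) from hu) hpc'' hjd
        exact ⟨r2, hs2, hpc2,
          xinj_of_prepend r' r2 hn2 hd2 hxi' (Or.inr hnoty),
          nodesin_of_prepend r' r2 hn2 hd2 hniT hsubN (fun _ => hyinN)⟩
      · obtain ⟨ρ1, hn1, hs1, hd1, hpc1⟩ :=
          prepend_route r' d Step.un (show StepValid (dropDirAt G X) d Step.un (r.nodes 1) from hdb) hpc'' hjd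
        have hxi1 : XInj X ρ1 := xinj_of_prepend r' ρ1 hn1 hd1 hxi' (Or.inl hdX)
        have hni1 : NodesIn X {v | ∃ j, 1 ≤ j ∧ j ≤ r.n ∧ v = r.nodes j} ρ1 :=
          nodesin_of_prepend r' ρ1 hn1 hd1 hniT subset_rfl (fun h => absurd hdX h)
        obtain ⟨r2, hs2, hpc2, hxi2, hni2⟩ := chain_block hXW hcX hyc hch hyX hyT ρ1 hs1 hpc1 hxi1 hni1
        refine ⟨r2, hs2, hpc2, hxi2, nodesin_mono hni2 ?_⟩
        rintro v hv
        rcases Set.mem_insert_iff.mp hv with rfl | hv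
        · exact hyinN
        · exact hsubN hv

private lemma walk_to_path {G : MixedGraph V} (hnb : NoBidirected G) {X W : Set V}
    (hXW : ∀ v ∈ X, v ∉ W) {y z : V} (hyz : y ≠ z) (hyX : y ∉ X) (hzX : z ∉ X) :
    ∀ n (r : Route (dropDirAt G X) y z), r.n = n → r.PathConnecting W → XInj X r →
      ∃ r' : Route (dropDirAt G X) y z, r'.IsPath ∧ r'.PathConnecting W := by
  intro n
  induction n using Nat.strong_induction_on with
  | _ n IH =>
  intro r hn hpc hxi
  by_cases hp : r.IsPath
  · exact ⟨r, hp, hpc⟩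
  have hrep : ∃ i j, i ≤ r.n ∧ j ≤ r.n ∧ i < j ∧ r.nodes i = r.nodes j := by
    simp only [Route.IsPath, not_forall] at hp
    obtain ⟨i, j, hi, hj, heq, hne⟩ := hp
    rcases Nat.lt_or_ge i j with h | h
    · exact ⟨i, j, hi, hj, h, heq⟩
    · exact ⟨j, i, hj, hi, by omega, heq.symm⟩
  obtain ⟨i, j, hi, hj, hij, heq⟩ := hrep
  have hvX : r.nodes i ∈ X := by
    by_contra hvx
    have := hxi i j hi hj heq hvx
    omega
  have hi0 : 0 < i := by
    rcases Nat.eq_zero_or_pos i with rfl | h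
    · exact absurd (r.first ▸ hvX) hyX
    · exact h
  have hjn : j < r.n := by
    rcases eq_or_lt_of_le hj with h | h
    · exfalso
      have hz' : r.nodes j ∈ X := heq ▸ hvX
      rw [h, r.last] at hz'
      exact hzX hz'
    · exact h
  have hikn : i < r.n := by omega
  have hsi := (dd_un_at_X hnb r hi0 hikn hvX).1
  have hvXj : r.nodes j ∈ X := heq ▸ hvX
  have hsj := (dd_un_at_X hnb r (by omega : 0 < j) hjn hvXj).2
  set d := j - i with hd
  have hd0 : 0 < d := by omega
  obtain ⟨r2, hn2, hnodes2, hsteps2⟩ : ∃ r2 : Route (dropDirAt G X) y z, r2.n = r.n - d ∧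
      (∀ k, r2.nodes k = if k ≤ i then r.nodes k else r.nodes (k + d)) ∧
      (∀ k, r2.steps k = if k < i then r.steps k else r.steps (k + d)) := by
    refine ⟨⟨r.n - d, by omega, fun k => if k ≤ i then r.nodes k else r.nodes (k + d),
      fun k => if k < i then r.steps k else r.steps (k + d), ?_, ?_, ?_⟩, rfl, fun _ => rfl,
      fun _ => rfl⟩
    · show (if 0 ≤ i then r.nodes 0 else r.nodes (0 + d)) = y
      rw [if_pos (by omega)]
      exact r.first
    · show (if r.n - d ≤ i then r.nodes (r.n - d) else r.nodes (r.n - d + d)) = z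
      rw [if_neg (by omega), show r.n - d + d = r.n from by omega]
      exact r.last
    · intro k hk
      by_cases hki : k < i
      · have hv := r.valid k (by omega)
        rw [if_pos hki, if_pos (by omega : k ≤ i), if_pos (by omega : k + 1 ≤ i)]
        exact hv
      · have hv := r.valid (k + d) (by omega)
        rw [if_neg hki, if_neg (by omega : ¬ k + 1 ≤ i)]
        by_cases hke : k = i
        · subst hke
          rw [if_pos (le_refl k)]
          rw [show k + d = j from by omega, show k + 1 + d = j + 1 from by omega, heq]
          have hv' := r.valid j hjn
          exact hv'
        · rw [if_neg (by omega : ¬ k ≤ i)]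
          rw [show k + 1 + d = k + d + 1 from by omega]
          exact hv
  have hpc2 : r2.PathConnecting W := by
    rw [pc_iff]
    intro m hm hmn
    rw [hn2] at hmn
    simp only [hsteps2, hnodes2]
    rcases lt_trichotomy m i with hlt | heqm | hgt
    · rw [if_pos (by omega : m - 1 < i), if_pos hlt, if_pos (by omega : m ≤ i)]
      exact (pc_iff r W).mp hpc m hm (by omega)
    · rw [if_pos (by omega : m - 1 < i), if_neg (by omega : ¬ m < i), if_pos (by omega : m ≤ i)]
      rw [show m = i from heqm, hsi, show i + d = j from by omega, hsj]
      exact ⟨fun hc => absurd hc collPair_unun, fun _ => Or.inl (hXW _ hvX)⟩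
    · rw [if_neg (by omega : ¬ m - 1 < i), if_neg (by omega : ¬ m < i),
        if_neg (by omega : ¬ m ≤ i)]
      have := (pc_iff r W).mp hpc (m + d) (by omega) (by omega)
      rw [show m + d - 1 = m - 1 + d from by omega] at this
      exact this
  have hxi2 : XInj X r2 := by
    intro k1 k2 h1 h2 heq' hnx
    rw [hn2] at h1 h2
    rw [hnodes2, hnodes2] at heq'
    rw [hnodes2] at hnx
    by_cases e1 : k1 ≤ i <;> by_cases e2 : k2 ≤ i
    · rw [if_pos e1] at heq' hnx
      rw [if_pos e2] at heq'
      exact hxi k1 k2 (by omega) (by omega) heq' hnx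
    · rw [if_pos e1] at heq' hnx
      rw [if_neg e2] at heq'
      have := hxi k1 (k2 + d) (by omega) (by omega) heq' hnx
      omega
    · rw [if_neg e1] at heq' hnx
      rw [if_pos e2] at heq'
      have := hxi (k1 + d) k2 (by omega) (by omega) heq' hnx
      omega
    · rw [if_neg e1] at heq' hnx
      rw [if_neg e2] at heq'
      have := hxi (k1 + d) (k2 + d) (by omega) (by omega) heq' hnx
      omega
  exact IH (r.n - d) (by omega) r2 hn2 hpc2 hxi2

private lemma contract {G : MixedGraph V} {X W : Set V} (hXW : ∀ v ∈ X, v ∉ W) {y z : V}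
    (hyX : y ∉ X) (hzX : z ∉ X) :
    ∀ n (r : Route (gmx G X) y z), r.n = n → r.IsPath → r.PathConnecting W →
      ∃ r' : Route (gmx G X) y z, r'.IsPath ∧ r'.PathConnecting W ∧
        ∀ k, k ≤ r'.n → r'.nodes k ∉ X := by
  intro n
  induction n using Nat.strong_induction_on with
  | _ n IH =>
  intro r hn hpath hpc
  by_cases hall : ∀ k, k ≤ r.n → r.nodes k ∉ X
  · exact ⟨r, hpath, hpc, hall⟩
  push_neg at hall
  obtain ⟨i, hi, hvX⟩ := hall
  have hi0 : 0 < i := by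
    rcases Nat.eq_zero_or_pos i with rfl | h
    · exact absurd (r.first ▸ hvX) hyX
    · exact h
  have hin : i < r.n := by
    rcases eq_or_lt_of_le hi with h | h
    · exfalso
      rw [h, r.last] at hvX
      exact hzX hvX
    · exact h
  obtain ⟨hs1, hs2⟩ := gm_un_at_X r hi0 hin hvX
  have hu1 : (gmx G X).undir (r.nodes (i - 1)) (r.nodes i) := by
    have hv := r.valid (i - 1) (by omega)
    rw [show i - 1 + 1 = i from by omega, hs1] at hv
    exact hv
  have hu2 : (gmx G X).undir (r.nodes i) (r.nodes (i + 1)) := by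
    have hv := r.valid i hin
    rw [hs2] at hv
    exact hv
  have hmerge : (gmx G X).undir (r.nodes (i - 1)) (r.nodes (i + 1)) :=
    Or.inr (ut_comp hvX hu1 hu2)
  obtain ⟨r2, hn2, hnodes2, hsteps2⟩ : ∃ r2 : Route (gmx G X) y z, r2.n = r.n - 1 ∧
      (∀ k, r2.nodes k = if k < i then r.nodes k else r.nodes (k + 1)) ∧
      (∀ k, r2.steps k = if k < i - 1 then r.steps k else
        if k = i - 1 then Step.un else r.steps (k + 1)) := by
    refine ⟨⟨r.n - 1, by omega, fun k => if k < i then r.nodes k else r.nodes (k + 1),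
      fun k => if k < i - 1 then r.steps k else if k = i - 1 then Step.un else r.steps (k + 1),
      ?_, ?_, ?_⟩, rfl, fun _ => rfl, fun _ => rfl⟩
    · show (if 0 < i then r.nodes 0 else r.nodes (0 + 1)) = y
      rw [if_pos hi0]
      exact r.first
    · show (if r.n - 1 < i then r.nodes (r.n - 1) else r.nodes (r.n - 1 + 1)) = z
      rw [if_neg (by omega), show r.n - 1 + 1 = r.n from by omega]
      exact r.last
    · intro k hk
      by_cases hk1 : k < i - 1
      · rw [if_pos hk1, if_pos (by omega : k < i), if_pos (by omega : k + 1 < i)]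
        exact r.valid k (by omega)
      by_cases hk2 : k = i - 1
      · rw [if_neg hk1, if_pos hk2, if_pos (by omega : k < i), if_neg (by omega : ¬ k + 1 < i)]
        rw [show k = i - 1 from hk2, show i - 1 + 1 + 1 = i + 1 from by omega]
        exact hmerge
      · rw [if_neg hk1, if_neg hk2, if_neg (by omega : ¬ k < i), if_neg (by omega : ¬ k + 1 < i)]
        exact r.valid (k + 1) (by omega)
  have hpath2 : r2.IsPath := by
    intro a b ha hb heq
    rw [hn2] at ha hb
    rw [hnodes2, hnodes2] at heq
    by_cases e1 : a < i <;> by_cases e2 : b < i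
    · rw [if_pos e1, if_pos e2] at heq
      exact hpath a b (by omega) (by omega) heq
    · rw [if_pos e1, if_neg e2] at heq
      have := hpath a (b + 1) (by omega) (by omega) heq
      omega
    · rw [if_neg e1, if_pos e2] at heq
      have := hpath (a + 1) b (by omega) (by omega) heq
      omega
    · rw [if_neg e1, if_neg e2] at heq
      have := hpath (a + 1) (b + 1) (by omega) (by omega) heq
      omega
  have hpc2 : r2.PathConnecting W := by
    rw [pc_iff]
    intro m hm hmn
    rw [hn2] at hmn
    simp only [hsteps2, hnodes2]
    rcases lt_trichotomy m i with hlt | heqm | hgt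
    · by_cases hm1 : m < i - 1
      · rw [if_pos (by omega : m - 1 < i - 1), if_pos hm1, if_pos hlt]
        exact (pc_iff r W).mp hpc m hm (by omega)
      · have hm2 : m = i - 1 := by omega
        rw [if_pos (by omega : m - 1 < i - 1), if_neg hm1, if_pos hm2, if_pos hlt]
        have hthis := (pc_iff r W).mp hpc m hm (by omega)
        have hsm : r.steps m = Step.un := by rw [hm2]; exact hs1
        rw [← hsm]
        exact hthis
    · rw [if_neg (by omega : ¬ m - 1 < i - 1), if_pos (by omega : m - 1 = i - 1),
        if_neg (by omega : ¬ m < i - 1), if_neg (by omega : ¬ m = i - 1),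
        if_neg (by omega : ¬ m < i)]
      rw [show m = i from heqm]
      have hthis := (pc_iff r W).mp hpc (i + 1) (by omega) (by omega)
      rw [show i + 1 - 1 = i from by omega, hs2] at hthis
      exact hthis
    · rw [if_neg (by omega : ¬ m - 1 < i - 1), if_neg (by omega : ¬ m - 1 = i - 1),
        if_neg (by omega : ¬ m < i - 1), if_neg (by omega : ¬ m = i - 1),
        if_neg (by omega : ¬ m < i)]
      have hthis := (pc_iff r W).mp hpc (m + 1) (by omega) (by omega)
      rw [show m + 1 - 1 = m - 1 + 1 from by omega] at hthis
      exact hthis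
  obtain ⟨r3, h3a, h3b, h3c⟩ := IH (r.n - 1) (by omega) r2 hn2 hpath2 hpc2
  exact ⟨r3, h3a, h3b, h3c⟩

private lemma route_gd_to_gm {G : MixedGraph V} (hnb : NoBidirected G) {X W : Set V} {y z : V}
    (r : Route (dropDirAt G X) y z) (hp : r.IsPath) (hc : r.PathConnecting W) :
    ∃ r' : Route (gmx G X) y z, r'.IsPath ∧ r'.PathConnecting W := by
  refine ⟨⟨r.n, r.npos, r.nodes, r.steps, r.first, r.last, ?_⟩, hp, ?_⟩
  · intro i hi
    have hv := r.valid i hi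
    rcases hs : r.steps i <;> rw [hs] at hv
    · exact hv
    · exact hv
    · exact absurd hv (hnb _ _)
    · exact Or.inl hv
  · rw [pc_iff]
    intro i hi hin
    exact good_gm_of_gd hnb ((pc_iff r W).mp hc i hi hin)

private lemma route_gm_to_gi {G : MixedGraph V} {X W : Set V} {y z : V}
    (r : Route (gmx G X) y z) (hall : ∀ k, k ≤ r.n → r.nodes k ∉ X)
    (hp : r.IsPath) (hc : r.PathConnecting W) :
    ∃ r' : Route (intervene G X) y z, r'.IsPath ∧ r'.PathConnecting (X ∪ W) := by
  refine ⟨⟨r.n, r.npos, r.nodes, r.steps, r.first, r.last, ?_⟩, hp, ?_⟩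
  · intro i hi
    have hi' : i < r.n := hi
    have hv := r.valid i hi'
    rcases hs : r.steps i <;> rw [hs] at hv
    · exact ⟨hv.1, hv.2.2⟩
    · exact ⟨hv.1, hv.2.2⟩
    · exact hv.elim
    · exact ⟨hall i (le_of_lt hi'), hall (i + 1) hi', hv⟩
  · rw [pc_iff]
    intro i hi hin
    have hin' : i < r.n := hin
    exact good_gi_of_gm (hall i (le_of_lt hin')) ((pc_iff r W).mp hc i hi hin')

private lemma route_gi_to_gm {G : MixedGraph V} (hnb : NoBidirected G) {X W : Set V} {y z : V}
    (r : Route (intervene G X) y z) (hall : ∀ k, k ≤ r.n → r.nodes k ∉ X)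
    (hp : r.IsPath) (hc : r.PathConnecting (X ∪ W)) :
    ∃ r' : Route (gmx G X) y z, r'.n = r.n ∧ (∀ k, r'.nodes k = r.nodes k) ∧
      r'.IsPath ∧ r'.PathConnecting W := by
  refine ⟨⟨r.n, r.npos, r.nodes, r.steps, r.first, r.last, ?_⟩, rfl, fun _ => rfl, hp, ?_⟩
  · intro i hi
    have hi' : i < r.n := hi
    have hv := r.valid i hi'
    rcases hs : r.steps i <;> rw [hs] at hv
    · exact ⟨hv.1, hall i (le_of_lt hi'), hv.2⟩
    · exact ⟨hv.1, hall (i + 1) hi', hv.2⟩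
    · exact absurd hv.1 (hnb _ _)
    · exact hv.2.2
  · rw [pc_iff]
    intro i hi hin
    have hin' : i < r.n := hin
    exact good_gm_of_gi hnb (hall i (le_of_lt hin')) ((pc_iff r (X ∪ W)).mp hc i hi hin')

end Rule1Aux
open MixedGraph in
/-- Equivalence of the antecedents of rule 1 of the calculus for aADMGs:
separation of `Y` from `Z` given `X ∪ W` in `G_X̂` is equivalent to separation
of `Y` from `Z` given `W` in `G` with all directed edges into and out of `X`
deleted. -/
theorem rule1_antecedent_equivalence
    {V : Type*} [Fintype V] (G : MixedGraph V) (hG : G.WellFormed)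
    (hnb : G.NoBidirected) (X Y Z W : Set V)
    (hXY : Disjoint X Y) (hXZ : Disjoint X Z) (hXW : Disjoint X W)
    (hYZ : Disjoint Y Z) (hYW : Disjoint Y W) (hZW : Disjoint Z W) :
    Separated (intervene G X) Y Z (X ∪ W) ↔ Separated (dropDirAt G X) Y Z W := by
  have hXW' : ∀ v ∈ X, v ∉ W := fun v hv => Set.disjoint_left.mp hXW hv
  constructor
  · intro hsep a ha b hb hex
    obtain ⟨r, hp, hc⟩ := hex
    have haX : a ∉ X := Set.disjoint_right.mp hXY ha
    have hbX : b ∉ X := Set.disjoint_right.mp hXZ hb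
    obtain ⟨r1, hp1, hc1⟩ := route_gd_to_gm hnb r hp hc
    obtain ⟨r2, hp2, hc2, hall2⟩ := contract hXW' haX hbX r1.n r1 rfl hp1 hc1
    obtain ⟨r3, hp3, hc3⟩ := route_gm_to_gi r2 hall2 hp2 hc2
    exact hsep a ha b hb ⟨r3, hp3, hc3⟩
  · intro hsep a ha b hb hex
    obtain ⟨r, hp, hc⟩ := hex
    have haX : a ∉ X := Set.disjoint_right.mp hXY ha
    have hbX : b ∉ X := Set.disjoint_right.mp hXZ hb
    have hab : a ≠ b := fun h => Set.disjoint_left.mp hYZ ha (h ▸ hb)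
    have hall := gi_notX hnb r haX hbX hc
    obtain ⟨r1, hn1, hnodes1, hp1, hc1⟩ := route_gi_to_gm hnb r hall hp hc
    have hall1 : ∀ k, k ≤ r1.n → r1.nodes k ∉ X := by
      intro k hk
      rw [hn1] at hk
      rw [hnodes1]
      exact hall k hk
    obtain ⟨r2, _, hc2, hxi2, _⟩ := expand hXW' r1.n a b r1 rfl hall1 hp1 hc1
    obtain ⟨r3, hp3, hc3⟩ := walk_to_path hnb hXW' hab haX hbX r2.n r2 rfl hc2 hxi2
    exact hsep a ha b hb ⟨r3, hp3, hc3⟩
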